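/- In a many-to-one market with responsive preferences, if μ and μ' are stable matchings then every student s satisfies μ(s) = ∅ if and only if μ'(s) = ∅. -/

import Mathlib

/-! Many-to-one matching framework (students `S` and colleges `C`).

Each student has a strict preference order over `C ∪ {∅}` and each college a
strict (responsive) ranking of `S ∪ {∅}`, both encoded by injective rank
functions into `ℕ` (larger = more preferred); `none` is the outside option.
A matching is a function `μ : S → Option C`; the set of students assigned to a
college is recovered by `assignedSet`. -/

variable {S C : Type*} [Fintype S] [DecidableEq S] [DecidableEq C]

def assignedSet (μ : S → Option C) (c : C) [Fintype S] [DecidableEq S] [DecidableEq C] :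
    Finset S :=
  Finset.univ.filter (fun s => μ s = some c)

structure MPrefs (S C : Type*) where
  prS : S → Option C → ℕ
  prC : C → Option S → ℕ
  injS : ∀ s, Function.Injective (prS s)
  injC : ∀ c, Function.Injective (prC c)

def MIndivRational (P : MPrefs S C) (q : C → ℕ) (μ : S → Option C) : Prop :=
  (∀ s c, μ s = some c → P.prS s none < P.prS s (some c) ∧ P.prC c none < P.prC c (some s)) ∧
  ∀ c, (assignedSet μ c).card ≤ q c

def MBlocks (P : MPrefs S C) (q : C → ℕ) (μ : S → Option C) (s : S) (c : C) : Prop :=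
  P.prS s (μ s) < P.prS s (some c) ∧
  ((∃ s' ∈ assignedSet μ c, P.prC c (some s') < P.prC c (some s)) ∨
   (P.prC c none < P.prC c (some s) ∧ (assignedSet μ c).card < q c))

def MStable (P : MPrefs S C) (q : C → ℕ) (μ : S → Option C) : Prop :=
  MIndivRational P q μ ∧ ∀ s c, ¬ MBlocks P q μ s c


lemma key (P : MPrefs S C) (q : C → ℕ) (μ μ' : S → Option C)
    (hμ : MStable P q μ) (hμ' : MStable P q μ') :
    ∀ s : S, P.prS s (μ' s) < P.prS s (μ s) → μ' s ≠ none := by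
  classical
  set T : Finset S := Finset.univ.filter (fun s => P.prS s (μ' s) < P.prS s (μ s)) with hTdef
  have hmemT : ∀ s, s ∈ T ↔ P.prS s (μ' s) < P.prS s (μ s) := by
    intro s; simp [hTdef]
  -- every member of T is matched in μ
  have hTsome : ∀ t ∈ T, ∃ c, μ t = some c := by
    intro t ht
    rw [hmemT] at ht
    cases hmt : μ t with
    | some c => exact ⟨c, rfl⟩
    | none =>
      rw [hmt] at ht
      cases hmt' : μ' t with
      | none => rw [hmt'] at ht; exact absurd ht (lt_irrefl _)
      | some c' =>
        have := (hμ'.1.1 t c' hmt').1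
        rw [hmt'] at ht
        exact absurd (ht.trans this) (lt_irrefl _)
  -- μ' t differs from μ t for t ∈ T
  have hne : ∀ t ∈ T, μ' t ≠ μ t := by
    intro t ht heq
    rw [hmemT, heq] at ht; exact lt_irrefl _ ht
  -- main structural lemma: colleges serving a T-student are full in μ' and prefer all their μ'-students
  have L1 : ∀ t ∈ T, ∀ c, μ t = some c →
      (assignedSet μ' c).card = q c ∧
      ∀ s' ∈ assignedSet μ' c, P.prC c (some t) < P.prC c (some s') := by
    intro t ht c hc
    have hnb := hμ'.2 t c
    rw [MBlocks] at hnb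
    push_neg at hnb
    have hpref : P.prS t (μ' t) < P.prS t (some c) := by
      rw [hmemT, hc] at ht; exact ht
    have h2 := hnb hpref
    have hIR := (hμ.1.1 t c hc).2
    have hfull : (assignedSet μ' c).card = q c := by
      have h3 := h2.2 hIR
      have := hμ'.1.2 c
      omega
    refine ⟨hfull, fun s' hs' => ?_⟩
    have hle := h2.1 s' hs'
    have hnein : t ∉ assignedSet μ' c := by
      simp only [assignedSet, Finset.mem_filter, Finset.mem_univ, true_and]
      intro h; rw [h] at hpref; exact lt_irrefl _ hpref
    have hne' : P.prC c (some t) ≠ P.prC c (some s') := by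
      intro h
      have := P.injC c h
      rw [Option.some_inj] at this
      rw [this] at hnein; exact hnein hs'
    omega
  -- the "replacement" set
  set U : Finset S := Finset.univ.filter
      (fun s' => μ s' ≠ μ' s' ∧ ∃ t ∈ T, μ t = μ' s') with hUdef
  have hmemU : ∀ s, s ∈ U ↔ (μ s ≠ μ' s ∧ ∃ t ∈ T, μ t = μ' s) := by
    intro s; simp [hUdef]
  -- U ⊆ T
  have subU : U ⊆ T := by
    intro s' hs'
    rw [hmemU] at hs'
    obtain ⟨hne', t, ht, htc⟩ := hs'
    obtain ⟨c, hc⟩ := hTsome t ht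
    have hc' : μ' s' = some c := by rw [hc] at htc; exact htc.symm
    by_contra hsT
    rw [hmemT] at hsT
    push_neg at hsT
    have hlt : P.prS s' (μ s') < P.prS s' (some c) := by
      rw [hc'] at hsT hne'
      have : P.prS s' (μ s') ≠ P.prS s' (some c) := fun h => hne' (P.injS s' h)
      omega
    have hs'A : s' ∈ assignedSet μ' c := by
      simp [assignedSet, hc']
    have htA : t ∈ assignedSet μ c := by simp [assignedSet, hc]
    exact hμ.2 s' c ⟨hlt, Or.inl ⟨t, htA, (L1 t ht c hc).2 s' hs'A⟩⟩
  -- counting: |T| ≤ |U|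
  have cardTU : T.card ≤ U.card := by
    set Cs : Finset (Option C) := T.image μ with hCs
    have hTb : T = Cs.biUnion (fun oc => T.filter (fun t => μ t = oc)) := by
      ext t
      simp only [Finset.mem_biUnion, Finset.mem_filter, hCs, Finset.mem_image]
      constructor
      · intro ht; exact ⟨μ t, ⟨t, ht, rfl⟩, ht, rfl⟩
      · rintro ⟨oc, _, ht, _⟩; exact ht
    have hUb : U = Cs.biUnion (fun oc => U.filter (fun s' => μ' s' = oc)) := by
      ext s'
      simp only [Finset.mem_biUnion, Finset.mem_filter, hCs, Finset.mem_image]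
      constructor
      · intro hs'
        obtain ⟨_, t, ht, htc⟩ := (hmemU s').1 hs'
        exact ⟨μ' s', ⟨t, ht, htc⟩, hs', rfl⟩
      · rintro ⟨oc, _, hs', _⟩; exact hs'
    have hdT : (Cs : Set (Option C)).PairwiseDisjoint (fun oc => T.filter (fun t => μ t = oc)) := by
      intro a _ b _ hab
      simp only [Finset.disjoint_left, Finset.mem_filter]
      rintro x ⟨_, hxa⟩ ⟨_, hxb⟩
      exact hab (hxa ▸ hxb ▸ rfl)
    have hdU : (Cs : Set (Option C)).PairwiseDisjoint (fun oc => U.filter (fun s' => μ' s' = oc)) := by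
      intro a _ b _ hab
      simp only [Finset.disjoint_left, Finset.mem_filter]
      rintro x ⟨_, hxa⟩ ⟨_, hxb⟩
      exact hab (hxa ▸ hxb ▸ rfl)
    rw [hTb, hUb, Finset.card_biUnion hdT, Finset.card_biUnion hdU]
    apply Finset.sum_le_sum
    intro oc hoc
    obtain ⟨t, ht, hoc'⟩ := Finset.mem_image.1 hoc
    obtain ⟨c, hc⟩ := hTsome t ht
    subst hoc'
    rw [hc]
    -- per-college inequality
    have hsub1 : T.filter (fun t' => μ t' = some c) ⊆ assignedSet μ c \ assignedSet μ' c := by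
      intro t' ht'
      rw [Finset.mem_filter] at ht'
      rw [Finset.mem_sdiff]
      constructor
      · simp [assignedSet, ht'.2]
      · simp only [assignedSet, Finset.mem_filter, Finset.mem_univ, true_and]
        intro h
        have := hne t' ht'.1
        rw [h, ht'.2] at this
        exact this rfl
    have heq2 : U.filter (fun s' => μ' s' = some c) = assignedSet μ' c \ assignedSet μ c := by
      ext s'
      rw [Finset.mem_filter, Finset.mem_sdiff]
      simp only [assignedSet, Finset.mem_filter, Finset.mem_univ, true_and]
      constructor
      · rintro ⟨hsU, hc'⟩
        refine ⟨hc', ?_⟩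
        intro h
        exact ((hmemU s').1 hsU).1 (h.trans hc'.symm)
      · rintro ⟨hc', hnc⟩
        refine ⟨(hmemU s').2 ⟨?_, t, ht, hc.trans hc'.symm⟩, hc'⟩
        rw [hc']; exact hnc
    have hcards : (assignedSet μ c).card ≤ (assignedSet μ' c).card := by
      rw [(L1 t ht c hc).1]; exact hμ.1.2 c
    calc (T.filter (fun t' => μ t' = some c)).card
        ≤ (assignedSet μ c \ assignedSet μ' c).card := Finset.card_le_card hsub1
      _ ≤ (assignedSet μ' c \ assignedSet μ c).card := by
          have h1 := Finset.card_sdiff_add_card_inter (assignedSet μ c) (assignedSet μ' c)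
          have h2 := Finset.card_sdiff_add_card_inter (assignedSet μ' c) (assignedSet μ c)
          rw [Finset.inter_comm] at h2
          omega
      _ = (U.filter (fun s' => μ' s' = some c)).card := by rw [heq2]
  have hUT : U = T := Finset.eq_of_subset_of_card_le subU cardTU
  -- conclusion
  intro s hs hnone
  have hsT : s ∈ T := (hmemT s).2 hs
  rw [← hUT, hmemU] at hsT
  obtain ⟨_, t, ht, htc⟩ := hsT
  obtain ⟨c, hc⟩ := hTsome t ht
  rw [hc, hnone] at htc
  exact nomatch htc

/-- **Rural Hospitals, part 1.** Two stable many-to-one matchings leave the same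
students unmatched. -/
theorem stmt8 (P : MPrefs S C) (q : C → ℕ) (μ μ' : S → Option C)
    (hμ : MStable P q μ) (hμ' : MStable P q μ') :
    ∀ s : S, μ s = none ↔ μ' s = none := by
  intro s
  constructor
  · intro h
    by_contra h'
    cases hc : μ' s with
    | none => exact h' hc
    | some c =>
      have hIR := (hμ'.1.1 s c hc).1
      have : P.prS s (μ s) < P.prS s (μ' s) := by rw [h, hc]; exact hIR
      exact (key P q μ' μ hμ' hμ s this) h
  · intro h
    by_contra h'
    cases hc : μ s with
    | none => exact h' hc
    | some c =>
      have hIR := (hμ.1.1 s c hc).1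
      have : P.prS s (μ' s) < P.prS s (μ s) := by rw [h, hc]; exact hIR
      exact (key P q μ μ' hμ hμ' s this) h
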